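/- Let f : ℝ → [0,∞] be a lower semicontinuous, convex, non-decreasing function with f(0) = 0, f(1) < ∞, and f(p) = +∞ for all p > 1. Then f^♯(q) is finite and non-negative for every q ≥ 0, f^♯(q') − f^♯(q) ≤ q' − q whenever 0 ≤ q ≤ q' (equivalently q ↦ q − f^♯(q) is non-decreasing on [0,∞)), and lim_{q→∞}(q − f^♯(q)) = sup_{q ≥ 0}(q − f^♯(q)) = f(1). -/

import Mathlib

open scoped Classical
noncomputable section

/-- Fenchel conjugate (Legendre transform) of an extended-real-valued function:
`fconj f q = sup_{p ∈ ℝ} (p*q - f p)`. -/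
def fconj (f : ℝ → EReal) (q : ℝ) : EReal := ⨆ p : ℝ, ((p * q : ℝ) : EReal) - f p

/-- Convexity for extended-real-valued functions on `ℝ`. -/
def ConvexE (f : ℝ → EReal) : Prop :=
  ∀ x y t : ℝ, 0 ≤ t → t ≤ 1 →
    f (t * x + (1 - t) * y) ≤ (t : EReal) * f x + ((1 - t : ℝ) : EReal) * f y

/-- The payoff function `ℓ_L`: `0` for `p ≤ 0`, `L` for `0 < p ≤ 1`, `+∞` for `p > 1`. -/
def ellL (L : ℝ) (p : ℝ) : EReal :=
  if p ≤ 0 then 0 else if p ≤ 1 then (L : EReal) else ⊤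

/-- Right derivative (as an extended real) of `f` at `p`, i.e. the infimum of the
right slopes `(f (p+h) - f p)/h` over `h > 0`. -/
def rightDE (f : ℝ → EReal) (p : ℝ) : EReal :=
  ⨅ h : {h : ℝ // 0 < h}, ((h.1⁻¹ : ℝ) : EReal) * (f (p + h.1) - f p)

/-- Left derivative (as an extended real) of `f` at `p`, i.e. the supremum of the
left slopes `(f p - f (p-h))/h` over `h > 0`. -/
def leftDE (f : ℝ → EReal) (p : ℝ) : EReal :=
  ⨆ h : {h : ℝ // 0 < h}, ((h.1⁻¹ : ℝ) : EReal) * (f p - f (p - h.1))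

/-- Closed convex envelope of `f`: the pointwise supremum of all lower semicontinuous
convex minorants of `f` (the largest closed convex function majorized by `f`). -/
def coE (f : ℝ → EReal) (p : ℝ) : EReal :=
  ⨆ g : {g : ℝ → EReal // ConvexE g ∧ LowerSemicontinuous g ∧ ∀ x, g x ≤ f x}, g.1 p

/-- Subdifferential of an extended-real-valued function at a point. -/
def subdiffE (f : ℝ → EReal) (p : ℝ) : Set ℝ :=
  {q : ℝ | ∀ r : ℝ, f p + ((q * (r - p) : ℝ) : EReal) ≤ f r}

section aux
variable {f : ℝ → EReal}

lemma fconj_nonneg (hf0 : f 0 = 0) (q : ℝ) : 0 ≤ fconj f q := by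
  have := le_iSup (fun p : ℝ => ((p * q : ℝ) : EReal) - f p) 0
  simp [hf0] at this; exact this

lemma term_bot {q p : ℝ} (hfp : f p = ⊤) : ((p * q : ℝ) : EReal) - f p = ⊥ := by
  rw [hfp, EReal.sub_top]

lemma fconj_le_q (hpos : ∀ p, 0 ≤ f p) (htop : ∀ p : ℝ, 1 < p → f p = ⊤)
    {q : ℝ} (hq : 0 ≤ q) : fconj f q ≤ (q : EReal) := by
  refine iSup_le fun p => ?_
  by_cases hp : p ≤ 1
  · calc ((p * q : ℝ) : EReal) - f p ≤ ((p * q : ℝ) : EReal) - 0 :=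
        EReal.sub_le_sub le_rfl (hpos p)
      _ = ((p * q : ℝ) : EReal) := by rw [sub_zero]
      _ ≤ (q : EReal) := by
        rw [EReal.coe_le_coe_iff]
        calc p * q ≤ 1 * q := mul_le_mul_of_nonneg_right hp hq
          _ = q := one_mul q
  · rw [term_bot (htop p (not_le.1 hp))]; exact bot_le

lemma fconj_ne_top (hpos : ∀ p, 0 ≤ f p) (htop : ∀ p : ℝ, 1 < p → f p = ⊤)
    {q : ℝ} (hq : 0 ≤ q) : fconj f q ≠ ⊤ :=
  ((fconj_le_q hpos htop hq).trans_lt (EReal.coe_lt_top q)).ne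

lemma fconj_ne_bot (hf0 : f 0 = 0) (q : ℝ) : fconj f q ≠ ⊥ := fun h =>
  absurd (h ▸ fconj_nonneg hf0 q) (by simp)

lemma fconj_key (hpos : ∀ p, 0 ≤ f p) (htop : ∀ p : ℝ, 1 < p → f p = ⊤)
    {q q' : ℝ} (hq : 0 ≤ q) (hle : q ≤ q') :
    fconj f q' ≤ fconj f q + ((q' - q : ℝ) : EReal) := by
  refine iSup_le fun p => ?_
  by_cases hp : p ≤ 1
  · by_cases hfp : f p = ⊤
    · rw [term_bot hfp]; exact bot_le
    · have hfb : f p ≠ ⊥ := fun h => absurd (h ▸ hpos p) (by simp)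
      have hco : f p = ((f p).toReal : EReal) := (EReal.coe_toReal hfp hfb).symm
      set r := (f p).toReal with hr
      have h1 : ((p * q - r : ℝ) : EReal) ≤ fconj f q := by
        have := le_iSup (fun p : ℝ => ((p * q : ℝ) : EReal) - f p) p
        rwa [hco, ← EReal.coe_sub] at this
      have h2 : (p * q' - r : ℝ) ≤ (p * q - r) + (q' - q) := by nlinarith
      calc ((p * q' : ℝ) : EReal) - f p = ((p * q' - r : ℝ) : EReal) := by
            rw [hco, EReal.coe_sub]
        _ ≤ (((p * q - r) + (q' - q) : ℝ) : EReal) := EReal.coe_le_coe_iff.2 h2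
        _ = ((p * q - r : ℝ) : EReal) + ((q' - q : ℝ) : EReal) := EReal.coe_add _ _
        _ ≤ fconj f q + ((q' - q : ℝ) : EReal) := add_le_add_left h1 _
  · rw [term_bot (htop p (not_le.1 hp))]; exact bot_le

end aux

example : True := trivial

section aux2
variable {f : ℝ → EReal}

lemma f_nonpos_zero (hpos : ∀ p, 0 ≤ f p) (hmono : Monotone f) (hf0 : f 0 = 0)
    {p : ℝ} (hp : p ≤ 0) : f p = 0 :=
  le_antisymm (hf0 ▸ hmono hp) (hpos p)

lemma fconj_top_of_neg (hpos : ∀ p, 0 ≤ f p) (hmono : Monotone f) (hf0 : f 0 = 0)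
    {q : ℝ} (hq : q < 0) : fconj f q = ⊤ := by
  rw [fconj, iSup_eq_top]
  intro b hb
  obtain ⟨M, hM⟩ : ∃ M : ℝ, b < (M : EReal) := by
    induction b with
    | bot => exact ⟨0, bot_lt_iff_ne_bot.2 (by simp)⟩
    | coe x => exact ⟨x + 1, by exact_mod_cast lt_add_one x⟩
    | top => exact absurd hb (lt_irrefl _)
  refine ⟨min 0 ((M + 1) / q), ?_⟩
  have hple : min 0 ((M + 1) / q) ≤ 0 := min_le_left _ _
  rw [f_nonpos_zero hpos hmono hf0 hple, sub_zero]
  refine hM.trans_le (EReal.coe_le_coe_iff.2 ?_)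
  rcases min_cases 0 ((M + 1) / q) with ⟨h, h'⟩ | ⟨h, h'⟩
  · rw [h, zero_mul]
    have hm : M + 1 ≤ 0 := by
      have h2 := mul_nonpos_of_nonneg_of_nonpos h' hq.le
      rwa [div_mul_cancel₀ _ (ne_of_lt hq)] at h2
    linarith
  · rw [h, div_mul_cancel₀ _ (ne_of_lt hq)]; linarith

end aux2

section aux3
variable {f : ℝ → EReal}

lemma g_le_f1 (hpos : ∀ p, 0 ≤ f p) (hfin : f 1 ≠ ⊤) {q : ℝ} :
    (q : EReal) - fconj f q ≤ f 1 := by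
  have hfb : f 1 ≠ ⊥ := fun h => absurd (h ▸ hpos 1) (by simp)
  set L := (f 1).toReal with hL
  have hco : f 1 = (L : EReal) := (EReal.coe_toReal hfin hfb).symm
  have h1 : ((q - L : ℝ) : EReal) ≤ fconj f q := by
    have := le_iSup (fun p : ℝ => ((p * q : ℝ) : EReal) - f p) 1
    rwa [hco, one_mul, ← EReal.coe_sub] at this
  calc (q : EReal) - fconj f q ≤ (q : EReal) - ((q - L : ℝ) : EReal) :=
      EReal.sub_le_sub le_rfl h1
    _ = ((q - (q - L) : ℝ) : EReal) := (EReal.coe_sub _ _).symm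
    _ = (L : EReal) := by norm_num
    _ = f 1 := hco.symm

lemma exists_g_ge (hpos : ∀ p, 0 ≤ f p) (hlsc : LowerSemicontinuous f)
    (hmono : Monotone f) (htop : ∀ p : ℝ, 1 < p → f p = ⊤)
    {c : ℝ} (hc : (c : EReal) < f 1) :
    ∃ q : ℝ, 0 ≤ q ∧ (c : EReal) ≤ (q : EReal) - fconj f q := by
  have hev := hlsc 1 (c : EReal) hc
  rw [Metric.eventually_nhds_iff] at hev
  obtain ⟨ε, hε, hball⟩ := hev
  set p₀ : ℝ := 1 - ε / 2 with hp₀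
  have hp₀1 : p₀ < 1 := by simp [hp₀]; linarith
  have hδ : 0 < 1 - p₀ := by simp [hp₀]; linarith
  have hcp₀ : (c : EReal) < f p₀ := by
    apply hball
    simp only [Real.dist_eq, hp₀]
    rw [abs_of_nonpos (by linarith)]
    linarith
  set q : ℝ := max 0 (c / (1 - p₀)) with hqdef
  have hq0 : 0 ≤ q := le_max_left _ _
  refine ⟨q, hq0, ?_⟩
  have hkey : fconj f q ≤ ((q - c : ℝ) : EReal) := by
    refine iSup_le fun p => ?_
    by_cases hp1 : p ≤ 1
    · by_cases hpp : p₀ ≤ p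
      · have hfc : (c : EReal) ≤ f p := (hcp₀.trans_le (hmono hpp)).le
        calc ((p * q : ℝ) : EReal) - f p ≤ ((p * q : ℝ) : EReal) - (c : EReal) :=
            EReal.sub_le_sub le_rfl hfc
          _ = ((p * q - c : ℝ) : EReal) := (EReal.coe_sub _ _).symm
          _ ≤ ((q - c : ℝ) : EReal) := by
            rw [EReal.coe_le_coe_iff]
            have : p * q ≤ 1 * q := mul_le_mul_of_nonneg_right hp1 hq0
            linarith
      · have hcq : c ≤ (1 - p₀) * q := by
          have h1 : c / (1 - p₀) ≤ q := le_max_right _ _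
          have h2 := mul_le_mul_of_nonneg_left h1 hδ.le
          rwa [mul_div_cancel₀ _ (ne_of_gt hδ)] at h2
        calc ((p * q : ℝ) : EReal) - f p ≤ ((p * q : ℝ) : EReal) - 0 :=
            EReal.sub_le_sub le_rfl (hpos p)
          _ = ((p * q : ℝ) : EReal) := by rw [sub_zero]
          _ ≤ ((q - c : ℝ) : EReal) := by
            rw [EReal.coe_le_coe_iff]
            have : p * q ≤ p₀ * q := mul_le_mul_of_nonneg_right (le_of_not_ge hpp) hq0
            nlinarith
    · rw [term_bot (htop p (not_le.1 hp1))]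
      exact bot_le
  calc (c : EReal) = ((q - (q - c) : ℝ) : EReal) := by norm_num
    _ = (q : EReal) - ((q - c : ℝ) : EReal) := EReal.coe_sub _ _
    _ ≤ (q : EReal) - fconj f q := EReal.sub_le_sub le_rfl hkey

end aux3

theorem fconj_main_aux
    (f : ℝ → EReal) (hpos : ∀ p, 0 ≤ f p) (hlsc : LowerSemicontinuous f)
    (hmono : Monotone f) (hf0 : f 0 = 0) (hfin : f 1 ≠ ⊤)
    (htop : ∀ p : ℝ, 1 < p → f p = ⊤) :
    (∀ q : ℝ, 0 ≤ q → 0 ≤ fconj f q ∧ fconj f q ≠ ⊤) ∧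
    (∀ q q' : ℝ, 0 ≤ q → q ≤ q' → fconj f q' - fconj f q ≤ ((q' - q : ℝ) : EReal)) ∧
    MonotoneOn (fun q : ℝ => (q : EReal) - fconj f q) (Set.Ici (0 : ℝ)) ∧
    Filter.Tendsto (fun q : ℝ => (q : EReal) - fconj f q) Filter.atTop (nhds (f 1)) ∧
    (⨆ q : {q : ℝ // 0 ≤ q}, ((q.1 : EReal) - fconj f q.1)) = f 1 := by
  -- real-valued version of fconj on [0,∞)
  have hco : ∀ q : ℝ, 0 ≤ q → fconj f q = (((fconj f q).toReal : ℝ) : EReal) :=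
    fun q hq => (EReal.coe_toReal (fconj_ne_top hpos htop hq) (fconj_ne_bot hf0 q)).symm
  have hreal : ∀ q q' : ℝ, 0 ≤ q → q ≤ q' →
      (fconj f q').toReal ≤ (fconj f q).toReal + (q' - q) := by
    intro q q' hq hle
    have h := fconj_key hpos htop hq hle
    rw [hco q hq, hco q' (hq.trans hle), ← EReal.coe_add, EReal.coe_le_coe_iff] at h
    exact h
  have hlip : ∀ q q' : ℝ, 0 ≤ q → q ≤ q' →
      fconj f q' - fconj f q ≤ ((q' - q : ℝ) : EReal) := by
    intro q q' hq hle
    rw [hco q hq, hco q' (hq.trans hle), ← EReal.coe_sub, EReal.coe_le_coe_iff]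
    have := hreal q q' hq hle
    linarith
  have hmonoG : MonotoneOn (fun q : ℝ => (q : EReal) - fconj f q) (Set.Ici (0 : ℝ)) := by
    intro q hq q' hq' hle
    simp only
    rw [hco q hq, hco q' hq', ← EReal.coe_sub, ← EReal.coe_sub, EReal.coe_le_coe_iff]
    have := hreal q q' hq hle
    linarith
  -- the supremum over nonneg q
  have hfb : f 1 ≠ ⊥ := fun h => absurd (h ▸ hpos 1) (by simp)
  set S := ⨆ q : {q : ℝ // 0 ≤ q}, ((q.1 : EReal) - fconj f q.1) with hS
  have hSle : S ≤ f 1 := iSup_le fun q => g_le_f1 hpos hfin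
  have fconj0 : fconj f 0 = 0 :=
    le_antisymm (by simpa using fconj_le_q hpos htop le_rfl) (fconj_nonneg hf0 0)
  have hS0 : 0 ≤ S := by
    have := le_iSup (fun q : {q : ℝ // 0 ≤ q} => ((q.1 : EReal) - fconj f q.1))
      ⟨0, le_rfl⟩
    simpa [fconj0] using this
  have hSnt : S ≠ ⊤ := (hSle.trans_lt (lt_top_iff_ne_top.2 hfin)).ne
  have hSnb : S ≠ ⊥ := fun h => absurd (h ▸ hS0) (by simp)
  have hSco : S = ((S.toReal : ℝ) : EReal) := (EReal.coe_toReal hSnt hSnb).symm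
  have hf1co : f 1 = (((f 1).toReal : ℝ) : EReal) := (EReal.coe_toReal hfin hfb).symm
  have hSge : f 1 ≤ S := by
    rw [hf1co, hSco, EReal.coe_le_coe_iff]
    refine le_of_forall_lt_imp_le_of_dense fun c hc => ?_
    have hcE : (c : EReal) < f 1 := by rw [hf1co]; exact_mod_cast hc
    obtain ⟨q, hq0, hq⟩ := exists_g_ge hpos hlsc hmono htop hcE
    have : (c : EReal) ≤ S := hq.trans (le_iSup
      (fun q : {q : ℝ // 0 ≤ q} => ((q.1 : EReal) - fconj f q.1)) ⟨q, hq0⟩)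
    rw [hSco] at this
    exact EReal.coe_le_coe_iff.1 this
  have hSeq : S = f 1 := le_antisymm hSle hSge
  -- tendsto
  have hGtop : ∀ q : ℝ, q < 0 → (q : EReal) - fconj f q = ⊥ := by
    intro q hq
    rw [fconj_top_of_neg hpos hmono hf0 hq, EReal.sub_top]
  have hGmono : Monotone (fun q : ℝ => (q : EReal) - fconj f q) := by
    intro q q' hle
    rcases lt_or_ge q 0 with hq | hq
    · simp only [hGtop q hq]; exact bot_le
    · exact hmonoG hq (hq.trans hle) hle
  have htend := tendsto_atTop_iSup hGmono
  have hsupR : (⨆ q : ℝ, ((q : EReal) - fconj f q)) = f 1 := by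
    refine le_antisymm (iSup_le fun q => ?_) ?_
    · rcases lt_or_ge q 0 with hq | hq
      · rw [hGtop q hq]; exact bot_le
      · exact g_le_f1 hpos hfin
    · rw [← hSeq]
      exact iSup_le fun q => le_iSup (fun q : ℝ => ((q : EReal) - fconj f q)) q.1
  rw [hsupR] at htend
  exact ⟨fun q hq => ⟨fconj_nonneg hf0 q, fconj_ne_top hpos htop hq⟩,
    hlip, hmonoG, htend, hSeq⟩


/-- **1-Lipschitz monotone behavior of the conjugate**: for `f` lsc, convex,
non-decreasing, with `f 0 = 0`, `f 1 < ∞` and `f = +∞` on `(1,∞)`, the conjugate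
`f^♯` is finite and non-negative on `[0,∞)`, satisfies
`f^♯(q') - f^♯(q) ≤ q' - q` for `0 ≤ q ≤ q'` (equivalently `q ↦ q - f^♯(q)` is
non-decreasing on `[0,∞)`), and `lim_{q→∞}(q - f^♯(q)) = sup_{q ≥ 0}(q - f^♯(q)) = f 1`. -/
theorem conj_one_lipschitz_and_limit
    (f : ℝ → EReal) (hpos : ∀ p, 0 ≤ f p) (hlsc : LowerSemicontinuous f)
    (hconv : ConvexE f) (hmono : Monotone f) (hf0 : f 0 = 0) (hfin : f 1 ≠ ⊤)
    (htop : ∀ p : ℝ, 1 < p → f p = ⊤) :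
    (∀ q : ℝ, 0 ≤ q → 0 ≤ fconj f q ∧ fconj f q ≠ ⊤) ∧
    (∀ q q' : ℝ, 0 ≤ q → q ≤ q' → fconj f q' - fconj f q ≤ ((q' - q : ℝ) : EReal)) ∧
    MonotoneOn (fun q : ℝ => (q : EReal) - fconj f q) (Set.Ici (0 : ℝ)) ∧
    Filter.Tendsto (fun q : ℝ => (q : EReal) - fconj f q) Filter.atTop (nhds (f 1)) ∧
    (⨆ q : {q : ℝ // 0 ≤ q}, ((q.1 : EReal) - fconj f q.1)) = f 1 :=
  fconj_main_aux f hpos hlsc hmono hf0 hfin htop
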